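/- Let x be a fractional allocation of the items M to the agents N, and suppose every agent i has an additive valuation v_i : 2^M → ℝ≥0. Then there exists a fractional allocation y whose support is contained in the support of x such that (i) the allocation graph G_y is acyclic, and (ii) for every agent i, Σ_{j∈M} v_i({j}) y_{i,j} ≥ Σ_{j∈M} v_i({j}) x_{i,j}. -/

import Mathlib

open Finset

/-- A fractional allocation: entries in `[0,1]`, each item fully allocated. -/
def IsFracAlloc {N M : Type*} [Fintype N] (x : N → M → ℝ) : Prop :=
  (∀ i j, 0 ≤ x i j ∧ x i j ≤ 1) ∧ ∀ j, ∑ i, x i j = 1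

/-- The bipartite allocation graph on `N ⊕ M`: agent `i` is adjacent to item `j`
iff `x i j > 0`. -/
def allocGraph {N M : Type*} (x : N → M → ℝ) : SimpleGraph (N ⊕ M) where
  Adj a b :=
    (∃ i j, a = Sum.inl i ∧ b = Sum.inr j ∧ 0 < x i j) ∨
    (∃ i j, a = Sum.inr j ∧ b = Sum.inl i ∧ 0 < x i j)
  symm := by
    refine ⟨?_⟩
    rintro a b (⟨i, j, rfl, rfl, h⟩ | ⟨i, j, rfl, rfl, h⟩)
    · exact Or.inr ⟨i, j, rfl, rfl, h⟩
    · exact Or.inl ⟨i, j, rfl, rfl, h⟩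
  loopless := by
    refine ⟨?_⟩
    rintro a (⟨i, j, rfl, h, -⟩ | ⟨i, j, rfl, h, -⟩) <;> simp at h

/-- An additive valuation. -/
def IsAdditive {M : Type*} (v : Finset M → NNReal) : Prop :=
  ∀ S : Finset M, v S = ∑ j ∈ S, v {j}

/-- A monotone valuation. -/
def IsMonotoneVal {M : Type*} (v : Finset M → NNReal) : Prop :=
  ∀ A B : Finset M, A ⊆ B → v A ≤ v B

/-- A submodular valuation. -/
def IsSubmodular {M : Type*} [DecidableEq M] (v : Finset M → NNReal) : Prop :=
  ∀ A B : Finset M, v (A ∪ B) + v (A ∩ B) ≤ v A + v B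

/-- A normalized valuation. -/
def IsNormalized {M : Type*} (v : Finset M → NNReal) : Prop := v ∅ = 0

/-- The multilinear extension of a set function. -/
noncomputable def mlExt {M : Type*} [Fintype M] [DecidableEq M]
    (v : Finset M → NNReal) (y : M → ℝ) : ℝ :=
  ∑ S : Finset M, (v S : ℝ) * ((∏ j ∈ S, y j) * ∏ j ∈ Sᶜ, (1 - y j))

/-- `max_{j : row j > 0} v {j}` (0 if the support is empty). -/
noncomputable def maxOnSupport {M : Type*} [Fintype M]
    (v : Finset M → NNReal) (row : M → ℝ) : NNReal :=
  (Finset.univ.filter fun j => 0 < row j).sup fun j => v {j}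

/-- An integral allocation: a partition of the items among the agents. -/
def IsPartition {N M : Type*} (A : N → Finset M) : Prop := ∀ j : M, ∃! i : N, j ∈ A i

/-- The concave closure `f⁺` of a set function. -/
noncomputable def concaveClosure {M : Type*} [Fintype M] [DecidableEq M]
    (v : Finset M → NNReal) (y : M → ℝ) : ℝ :=
  sSup {r : ℝ | ∃ lam : Finset M → ℝ, (∀ S, 0 ≤ lam S) ∧ (∑ S : Finset M, lam S = 1) ∧
    (∀ j : M, (∑ S : Finset M, lam S * (if j ∈ S then 1 else 0)) = y j) ∧
    r = ∑ S : Finset M, lam S * (v S : ℝ)}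

/-- The maximin-share value of `v` over `n` parts. -/
noncomputable def mmsValue {M : Type*} (n : ℕ) (v : Finset M → NNReal) : ℝ :=
  sSup {r : ℝ | ∃ P : Fin n → Finset M, (∀ j : M, ∃! k, j ∈ P k) ∧ r = ⨅ k, (v (P k) : ℝ)}


open Fin.CommRing in
lemma exists_t {k : ℕ} [NeZero k] (A B : Fin k → ℝ)
    (hA : ∀ l, 0 ≤ A l) (hB : ∀ l, 0 ≤ B l) (hAB : ∏ m, B m ≤ ∏ l, A l) :
    ∃ t : Fin k → ℝ, (∃ l, t l ≠ 0) ∧ ∀ m, t m * B m ≤ t (m + 1) * A (m + 1) := by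
  classical
  obtain ⟨n, rfl⟩ : ∃ n, k = n + 1 := ⟨k - 1, (Nat.succ_pred_eq_of_pos (NeZero.pos k)).symm⟩
  by_cases hB0 : ∃ l₀, B l₀ = 0
  · obtain ⟨l₀, hl₀⟩ := hB0
    refine ⟨fun l => if l = l₀ then 1 else 0, ⟨l₀, by simp⟩, fun m => ?_⟩
    dsimp only
    by_cases hm : m = l₀
    · subst hm
      rw [if_pos rfl, hl₀, mul_zero]
      exact mul_nonneg (by split <;> norm_num) (hA _)
    · rw [if_neg hm, zero_mul]
      exact mul_nonneg (by split <;> norm_num) (hA _)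
  · push_neg at hB0
    have hBpos : ∀ l, 0 < B l := fun l => lt_of_le_of_ne (hB l) (Ne.symm (hB0 l))
    have hBprodpos : 0 < ∏ m, B m := Finset.prod_pos fun l _ => hBpos l
    have hApos : ∀ l, 0 < A l := by
      intro l
      rcases lt_or_eq_of_le (hA l) with h | h
      · exact h
      · exfalso
        have h0 : ∏ l', A l' = 0 := Finset.prod_eq_zero (mem_univ l) h.symm
        rw [h0] at hAB
        exact absurd (lt_of_lt_of_le hBprodpos hAB) (lt_irrefl 0)
    set g : Fin (n+1) → ℝ := fun s => B (s - 1) / A s with hg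
    have hgpos : ∀ s, 0 < g s := fun s => div_pos (hBpos _) (hApos _)
    set t : Fin (n+1) → ℝ :=
      fun l => ∏ s ∈ univ.filter (fun s : Fin (n+1) => s ≠ 0 ∧ (s : ℕ) ≤ (l : ℕ)), g s with ht
    have ht0 : t 0 = 1 := by
      rw [ht]
      have he : (univ.filter (fun s : Fin (n+1) => s ≠ 0 ∧ (s : ℕ) ≤ ((0 : Fin (n+1)) : ℕ))) = ∅ := by
        ext s
        simp only [mem_filter, mem_univ, true_and, Finset.notMem_empty, iff_false, not_and]
        intro hs hle
        have hv : (s : ℕ) = 0 := by simpa using hle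
        exact hs (Fin.ext (by simp [hv]))
      simp only []
      rw [he]
      exact Finset.prod_empty
    have htpos : ∀ l, 0 < t l := fun l => Finset.prod_pos fun s _ => hgpos s
    have hlast : Fin.last n + 1 = 0 := by simp [Fin.ext_iff, Fin.last, Fin.val_add]
    refine ⟨t, ⟨0, (htpos 0).ne'⟩, fun m => ?_⟩
    by_cases hm1 : m + 1 = 0
    · have hmlast : m = Fin.last n := add_right_cancel (hm1.trans hlast.symm)
      have hfilt : (univ.filter (fun s : Fin (n+1) => s ≠ 0 ∧ (s : ℕ) ≤ (m : ℕ))) = univ.erase 0 := by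
        ext s
        simp only [mem_filter, mem_univ, true_and, Finset.mem_erase, and_true]
        constructor
        · exact fun h => h.1
        · exact fun h => ⟨h, by rw [hmlast]; exact Fin.is_le s⟩
      have h1 : g 0 * t m = ∏ s, g s := by
        simp only [ht, hfilt]
        exact Finset.mul_prod_erase univ g (mem_univ 0)
      have h2 : ∏ s, g s = (∏ s, B (s - 1)) / ∏ s, A s := by
        simp only [hg]; exact Finset.prod_div_distrib _ _
      have h3 : ∏ s : Fin (n+1), B (s - 1) = ∏ s, B s := Equiv.prod_comp (Equiv.subRight 1) B
      have hgle : ∏ s, g s ≤ 1 := by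
        rw [h2, h3]
        exact div_le_one_of_le₀ hAB (le_of_lt (Finset.prod_pos fun l _ => hApos l))
      have hzs : (0 : Fin (n+1)) - 1 = Fin.last n := by
        have hneg : Fin.last n = -1 := eq_neg_of_add_eq_zero_left hlast
        rw [hneg]; ring
      have hg0 : g 0 = B m / A 0 := by simp only [hg, hzs, hmlast]
      have hBm : B m ≠ 0 := (hBpos m).ne'
      have hA0 : A 0 ≠ 0 := (hApos 0).ne'
      have htm : t m * B m = (∏ s, g s) * A 0 := by
        rw [hg0] at h1
        field_simp at h1
        nlinarith [h1]
      rw [hm1, ht0, one_mul, htm]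
      exact mul_le_of_le_one_left (hA 0) hgle
    · have hmlast : m ≠ Fin.last n := by
        intro h; exact hm1 (by rw [h, hlast])
      have hval : ((m + 1 : Fin (n+1)) : ℕ) = (m : ℕ) + 1 := by
        rw [Fin.val_add_one]; simp [hmlast]
      have hfilt : (univ.filter (fun s : Fin (n+1) => s ≠ 0 ∧ (s : ℕ) ≤ ((m+1 : Fin (n+1)) : ℕ)))
          = insert (m+1) (univ.filter (fun s : Fin (n+1) => s ≠ 0 ∧ (s : ℕ) ≤ (m : ℕ))) := by
        ext s
        simp only [mem_filter, mem_univ, true_and, Finset.mem_insert]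
        rw [hval]
        constructor
        · rintro ⟨hs0, hsle⟩
          rcases Nat.lt_or_ge (s : ℕ) ((m : ℕ) + 1) with h | h
          · right; exact ⟨hs0, by omega⟩
          · left; exact Fin.ext (by rw [hval]; omega)
        · rintro (rfl | ⟨hs0, hsle⟩)
          · exact ⟨hm1, hval.le⟩
          · exact ⟨hs0, by omega⟩
      have hnotmem : (m+1 : Fin (n+1)) ∉
          (univ.filter (fun s : Fin (n+1) => s ≠ 0 ∧ (s : ℕ) ≤ (m : ℕ))) := by
        simp only [mem_filter, mem_univ, true_and, not_and]
        intro _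
        rw [hval]; omega
      have hstep : t (m + 1) = g (m + 1) * t m := by
        simp only [ht, hfilt]
        exact Finset.prod_insert hnotmem
      have hg1 : g (m + 1) = B m / A (m + 1) := by
        simp only [hg, add_sub_cancel_right]
      have hAm : A (m+1) ≠ 0 := (hApos _).ne'
      rw [hstep, hg1]
      apply le_of_eq
      field_simp

lemma getVert_eq_support_get {V : Type*} {G : SimpleGraph V} {u v : V} (p : G.Walk u v) :
    ∀ (t : ℕ) (h : t < p.support.length), p.getVert t = p.support.get ⟨t, h⟩ := by
  induction p with
  | nil =>
    intro t h
    simp only [SimpleGraph.Walk.support_nil, List.length_cons, List.length_nil] at h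
    interval_cases t
    · simp [SimpleGraph.Walk.support_nil]
  | cons hadj q ih =>
    intro t h
    cases t with
    | zero => simp [SimpleGraph.Walk.getVert]
    | succ n =>
      simp only [SimpleGraph.Walk.support_cons, List.length_cons] at h
      rw [SimpleGraph.Walk.getVert_cons_succ]
      rw [ih n (by omega)]
      simp [SimpleGraph.Walk.support_cons]

lemma cycle_getVert_inj {V : Type*} {G : SimpleGraph V} {a : V} {p : G.Walk a a}
    (hp : p.IsCycle) : ∀ s t, s < p.length → t < p.length →
      p.getVert s = p.getVert t → s = t := by
  have hnd : p.support.tail.Nodup := hp.support_nodup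
  have hlen : p.support.length = p.length + 1 := SimpleGraph.Walk.length_support p
  have htl : p.support.tail.length = p.length := by
    rw [List.length_tail, hlen]; omega
  have hget : ∀ (m : ℕ) (hm : m < p.length), p.support.tail.get ⟨m, by omega⟩
      = p.getVert (m + 1) := by
    intro m hm
    rw [List.get_tail]
    · rw [getVert_eq_support_get p (m+1) (by omega)]
  have key : ∀ s t, 1 ≤ s → s ≤ p.length → 1 ≤ t → t ≤ p.length →
      p.getVert s = p.getVert t → s = t := by
    intro s t hs1 hs2 ht1 ht2 heq
    have h1 : p.support.tail.get ⟨s - 1, by omega⟩ = p.getVert s := by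
      rw [hget (s-1) (by omega)]; congr 1; omega
    have h2 : p.support.tail.get ⟨t - 1, by omega⟩ = p.getVert t := by
      rw [hget (t-1) (by omega)]; congr 1; omega
    have := List.Nodup.get_inj_iff hnd (i := ⟨s - 1, by omega⟩) (j := ⟨t - 1, by omega⟩)
    rw [h1, h2] at this
    have := this.mp heq
    simp only [Fin.mk.injEq] at this
    omega
  intro s t hs ht heq
  rcases Nat.eq_zero_or_pos s with rfl | hs1
  · rcases Nat.eq_zero_or_pos t with rfl | ht1
    · rfl
    · exfalso
      rw [SimpleGraph.Walk.getVert_zero] at heq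
      have hL : p.getVert p.length = a := by
        rw [SimpleGraph.Walk.getVert_length]
      have := key t p.length ht1 (by omega) (by
        have := hp.three_le_length; omega) (le_refl _) (by rw [heq.symm, hL])
      omega
  · rcases Nat.eq_zero_or_pos t with rfl | ht1
    · exfalso
      rw [SimpleGraph.Walk.getVert_zero] at heq
      have hL : p.getVert p.length = a := by
        rw [SimpleGraph.Walk.getVert_length]
      have := key s p.length hs1 (by omega) (by
        have := hp.three_le_length; omega) (le_refl _) (by rw [heq, hL])
      omega
    · exact key s t hs1 (by omega) ht1 (by omega) heq


lemma alloc_adj {N M : Type*} {x : N → M → ℝ} {a b : N ⊕ M} (h : (allocGraph x).Adj a b) :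
    (∃ i j, a = Sum.inl i ∧ b = Sum.inr j ∧ 0 < x i j) ∨
    (∃ i j, a = Sum.inr j ∧ b = Sum.inl i ∧ 0 < x i j) := h

lemma alloc_parity {N M : Type*} {x : N → M → ℝ} {i₀ : N} {b : N ⊕ M}
    (p : (allocGraph x).Walk (Sum.inl i₀) b) :
    ∀ t, t ≤ p.length → ((p.getVert t).isLeft = true ↔ Even t) := by
  intro t
  induction t with
  | zero => intro _; simp
  | succ n ih =>
    intro h
    have hn : n < p.length := by omega
    have ha := p.adj_getVert_succ hn
    have ihn := ih (by omega)
    rcases alloc_adj ha with ⟨i, j, h1, h2, _⟩ | ⟨i, j, h1, h2, _⟩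
    · have hev : Even n := by
        rw [h1] at ihn
        simpa using ihn
      rw [h2]
      simp [Nat.even_add_one, hev]
    · have hodd : ¬ Even n := by
        rw [h1] at ihn
        simpa using ihn
      rw [h2]
      simp [Nat.even_add_one, hodd]

lemma extract {N M : Type*} {x : N → M → ℝ} (h : ¬ (allocGraph x).IsAcyclic) :
    ∃ (n : ℕ) (I : Fin (n+2) → N) (J : Fin (n+2) → M),
      (∀ l, 0 < x (I l) (J l)) ∧ (∀ l, 0 < x (I (l+1)) (J l)) ∧
      Function.Injective J ∧ ∀ l, I l ≠ I (l+1) := by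
  classical
  unfold SimpleGraph.IsAcyclic at h
  push_neg at h
  obtain ⟨a, p, hp⟩ := h
  obtain ⟨i₀, c, hc⟩ : ∃ (i₀ : N) (c : (allocGraph x).Walk (Sum.inl i₀) (Sum.inl i₀)),
      c.IsCycle := by
    cases a with
    | inl i₀ => exact ⟨i₀, p, hp⟩
    | inr j₀ =>
      have h0 : 0 < p.length := by have := hp.three_le_length; omega
      have ha := p.adj_getVert_succ h0
      rw [SimpleGraph.Walk.getVert_zero] at ha
      rcases alloc_adj ha with ⟨i, j, h1, h2, _⟩ | ⟨i, j, h1, h2, _⟩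
      · exact absurd h1 (by simp)
      · have hmem : Sum.inl i ∈ p.support := by
          rw [← h2]
          exact SimpleGraph.Walk.mem_support_iff_exists_getVert.mpr ⟨1, rfl, by omega⟩
        exact ⟨i, p.rotate _ hmem, hp.rotate hmem⟩
  have h3 := hc.three_le_length
  have hpar := alloc_parity c
  have heven : Even c.length := by
    have hL := hpar c.length (le_refl _)
    rw [SimpleGraph.Walk.getVert_length] at hL
    simpa using hL
  obtain ⟨k, hk⟩ := heven
  obtain ⟨n, rfl⟩ : ∃ n, k = n + 2 := ⟨k - 2, by omega⟩
  set K := n + 2 with hK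
  have hlen : c.length = 2 * K := by omega
  have hIex : ∀ l : Fin K, ∃ i, c.getVert (2 * l.val) = Sum.inl i := by
    intro l
    have hb : 2 * l.val ≤ c.length := by have := l.is_lt; omega
    have hleft := (hpar _ hb).mpr ⟨l.val, by ring⟩
    rcases hv : c.getVert (2 * l.val) with i | j
    · exact ⟨i, rfl⟩
    · rw [hv] at hleft; simp at hleft
  have hJex : ∀ l : Fin K, ∃ j, c.getVert (2 * l.val + 1) = Sum.inr j := by
    intro l
    have hb : 2 * l.val + 1 ≤ c.length := by have := l.is_lt; omega
    have hodd : ¬ Even (2 * l.val + 1) := by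
      intro he
      rcases he with ⟨m, hm⟩
      omega
    have hiff := hpar _ hb
    rcases hv : c.getVert (2 * l.val + 1) with i | j
    · rw [hv] at hiff
      simp only [Sum.isLeft_inl] at hiff
      exact absurd (hiff.mp trivial) hodd
    · exact ⟨j, rfl⟩
  choose I hI using hIex
  choose J hJ using hJex
  have hone : ∀ l : Fin K, l.val + 1 < K → ((l + 1 : Fin K)).val = l.val + 1 := by
    intro l hl
    rw [Fin.val_add_one]
    have : l ≠ Fin.last (n+1) := by
      intro hlast
      rw [hlast] at hl
      simp [Fin.last] at hl
      omega
    simp [this]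
  have hzero : ∀ l : Fin K, l.val + 1 = K → (l + 1 : Fin K) = 0 := by
    intro l hl
    have : l = Fin.last (n+1) := by
      apply Fin.ext
      simp [Fin.last]
      omega
    rw [this]
    rw [Fin.ext_iff, Fin.val_add_one]
    simp
  have hkey : ∀ l : Fin K, c.getVert (2 * l.val + 2) = Sum.inl (I (l + 1)) := by
    intro l
    rcases Nat.lt_or_ge (l.val + 1) K with hlt | hge
    · have hval := hone l hlt
      have hIl := hI (l + 1)
      rw [hval] at hIl
      rw [show 2 * l.val + 2 = 2 * (l.val + 1) by ring]
      exact hIl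
    · have hl1 : l.val + 1 = K := by have := l.is_lt; omega
      rw [hzero l hl1]
      have h0 := hI 0
      simp only [Fin.val_zero, Nat.mul_zero] at h0
      rw [show 2 * l.val + 2 = c.length by omega, SimpleGraph.Walk.getVert_length]
      rw [← SimpleGraph.Walk.getVert_zero c]
      exact h0
  have inj := cycle_getVert_inj hc
  refine ⟨n, I, J, ?_, ?_, ?_, ?_⟩
  · intro l
    have hadj := c.adj_getVert_succ (show 2 * l.val < c.length by have := l.is_lt; omega)
    rw [hI l, hJ l] at hadj
    rcases alloc_adj hadj with ⟨i, j, h1, h2, hpos⟩ | ⟨i, j, h1, h2, hpos⟩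
    · obtain rfl : I l = i := Sum.inl.inj h1
      obtain rfl : J l = j := Sum.inr.inj h2
      exact hpos
    · exact absurd h1 (by simp)
  · intro l
    have hadj := c.adj_getVert_succ (show 2 * l.val + 1 < c.length by have := l.is_lt; omega)
    rw [hJ l, show 2 * l.val + 1 + 1 = 2 * l.val + 2 by ring, hkey l] at hadj
    rcases alloc_adj hadj with ⟨i, j, h1, h2, hpos⟩ | ⟨i, j, h1, h2, hpos⟩
    · exact absurd h1 (by simp)
    · obtain rfl : J l = j := Sum.inr.inj h1
      obtain rfl : I (l + 1) = i := Sum.inl.inj h2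
      exact hpos
  · intro l l' hJJ
    have hvv : c.getVert (2 * l.val + 1) = c.getVert (2 * l'.val + 1) := by
      rw [hJ l, hJ l', hJJ]
    have hb1 : 2 * l.val + 1 < c.length := by have := l.is_lt; omega
    have hb2 : 2 * l'.val + 1 < c.length := by have := l'.is_lt; omega
    have := inj _ _ hb1 hb2 hvv
    apply Fin.ext; omega
  · intro l hII
    rcases Nat.lt_or_ge (l.val + 1) K with hlt | hge
    · have hvv : c.getVert (2 * l.val) = c.getVert (2 * l.val + 2) := by
        rw [hI l, hkey l, hII]
      have hb1 : 2 * l.val < c.length := by have := l.is_lt; omega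
      have hb2 : 2 * l.val + 2 < c.length := by omega
      have := inj _ _ hb1 hb2 hvv
      omega
    · have hl1 : l.val + 1 = K := by have := l.is_lt; omega
      have h0 := hI 0
      simp only [Fin.val_zero, Nat.mul_zero] at h0
      have hvv : c.getVert (2 * l.val) = c.getVert 0 := by
        rw [hI l, SimpleGraph.Walk.getVert_zero, hII, hzero l hl1]
        rw [← h0, SimpleGraph.Walk.getVert_zero]
      have hb1 : 2 * l.val < c.length := by have := l.is_lt; omega
      have hb2 : 0 < c.length := by omega
      have := inj _ _ hb1 hb2 hvv
      omega

lemma sum_indicator_pair {N : Type*} [Fintype N] [DecidableEq N] (i₀ : N) (c : Prop) [Decidable c] :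
    ∑ i, (if i = i₀ ∧ c then (1:ℝ) else 0) = if c then 1 else 0 := by
  by_cases hc : c
  · simp [hc]
  · simp [hc]

lemma sum_weighted_pair {M : Type*} [Fintype M] [DecidableEq M] (c : M → ℝ) (j₀ : M)
    (P : Prop) [Decidable P] :
    ∑ j, c j * (if P ∧ j = j₀ then (1:ℝ) else 0) = if P then c j₀ else 0 := by
  by_cases hP : P
  · simp only [hP, true_and]
    rw [Finset.sum_eq_single j₀]
    · simp
    · intro b _ hb; simp [hb]
    · intro h; exact absurd (mem_univ j₀) h
  · simp [hP]

lemma reduce_core {N M : Type*} [Fintype N] [Fintype M] (v : N → Finset M → NNReal)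
    (x : N → M → ℝ) (hx : IsFracAlloc x) {k : ℕ} [NeZero k]
    (I : Fin k → N) (J : Fin k → M)
    (pos1 : ∀ l, 0 < x (I l) (J l)) (pos2 : ∀ l, 0 < x (I (l+1)) (J l))
    (Jinj : Function.Injective J) (Istep : ∀ l, I l ≠ I (l+1))
    (hAB : ∏ m, (v (I (m+1)) {J m} : ℝ) ≤ ∏ l, (v (I l) {J l} : ℝ)) :
    ∃ x' : N → M → ℝ, IsFracAlloc x' ∧ (∀ i j, 0 < x' i j → 0 < x i j) ∧
      (∃ i j, 0 < x i j ∧ x' i j = 0) ∧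
      ∀ i, ∑ j, (v i {j} : ℝ) * x i j ≤ ∑ j, (v i {j} : ℝ) * x' i j := by
  classical
  obtain ⟨t, ⟨l₀, htl₀⟩, hcons⟩ := exists_t (fun l => (v (I l) {J l} : ℝ))
    (fun m => (v (I (m+1)) {J m} : ℝ)) (fun l => NNReal.coe_nonneg _)
    (fun m => NNReal.coe_nonneg _) hAB
  set d : N → M → ℝ := fun i j => ∑ l, t l *
    ((if i = I l ∧ j = J l then (1:ℝ) else 0) - (if i = I (l+1) ∧ j = J l then 1 else 0)) with hd
  -- column sums of d vanish
  have hd_col : ∀ j, ∑ i, d i j = 0 := by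
    intro j
    rw [Finset.sum_comm]
    apply Finset.sum_eq_zero
    intro l _
    rw [← Finset.mul_sum, Finset.sum_sub_distrib, sum_indicator_pair, sum_indicator_pair]
    simp
  -- per-agent value change is nonnegative
  have hd_val : ∀ i, 0 ≤ ∑ j, (v i {j} : ℝ) * d i j := by
    intro i
    have expand : ∑ j, (v i {j} : ℝ) * d i j =
        ∑ l, (t l * (if i = I l then (v i {J l} : ℝ) else 0)
          - t l * (if i = I (l+1) then (v i {J l} : ℝ) else 0)) := by
      simp only [hd, Finset.mul_sum]
      rw [Finset.sum_comm]
      apply Finset.sum_congr rfl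
      intro l _
      have : ∀ j, (v i {j} : ℝ) * (t l *
          ((if i = I l ∧ j = J l then (1:ℝ) else 0) - (if i = I (l+1) ∧ j = J l then 1 else 0)))
          = t l * ((v i {j} : ℝ) * (if i = I l ∧ j = J l then (1:ℝ) else 0))
            - t l * ((v i {j} : ℝ) * (if i = I (l+1) ∧ j = J l then (1:ℝ) else 0)) := by
        intro j; ring
      rw [Finset.sum_congr rfl fun j _ => this j, Finset.sum_sub_distrib,
        ← Finset.mul_sum, ← Finset.mul_sum, sum_weighted_pair, sum_weighted_pair]
    rw [expand, Finset.sum_sub_distrib]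
    have shift : ∑ l, t l * (if i = I l then (v i {J l} : ℝ) else 0)
        = ∑ m, t (m+1) * (if i = I (m+1) then (v i {J (m+1)} : ℝ) else 0) :=
      (Equiv.sum_comp (Equiv.addRight (1 : Fin k))
        (fun l => t l * (if i = I l then (v i {J l} : ℝ) else 0))).symm
    rw [shift, ← Finset.sum_sub_distrib]
    apply Finset.sum_nonneg
    intro m _
    by_cases him : i = I (m+1)
    · simp only [if_pos him]
      have := hcons m
      simp only [him] at *
      linarith
    · simp [him]
  -- support of d inside support of x
  have hd_supp : ∀ i j, d i j ≠ 0 → 0 < x i j := by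
    intro i j hdij
    by_contra hx0
    apply hdij
    apply Finset.sum_eq_zero
    intro l _
    have h1 : ¬(i = I l ∧ j = J l) := by rintro ⟨rfl, rfl⟩; exact hx0 (pos1 l)
    have h2 : ¬(i = I (l+1) ∧ j = J l) := by rintro ⟨rfl, rfl⟩; exact hx0 (pos2 l)
    simp [h1, h2]
  -- d is nonzero at the distinguished entry
  have hd_l₀ : d (I l₀) (J l₀) = t l₀ := by
    rw [hd]
    simp only
    rw [Finset.sum_eq_single l₀]
    · have h1 : (I l₀ = I l₀ ∧ J l₀ = J l₀) := ⟨rfl, rfl⟩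
      have h3 : I l₀ ≠ I (l₀+1) := Istep l₀
      simp [h1, h3]
    · intro l _ hl
      have h1 : ¬(I l₀ = I l ∧ J l₀ = J l) := fun h => hl (Jinj h.2.symm)
      have h2 : ¬(I l₀ = I (l+1) ∧ J l₀ = J l) := fun h => hl (Jinj h.2.symm)
      simp [h1, h2]
    · intro h; exact absurd (mem_univ l₀) h
  -- there is a strictly negative entry of d
  obtain ⟨i₁, j₁, hneg⟩ : ∃ i j, d i j < 0 := by
    rcases lt_or_gt_of_ne htl₀ with hlt | hgt
    · exact ⟨I l₀, J l₀, by rw [hd_l₀]; exact hlt⟩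
    · by_contra hno
      push_neg at hno
      have hall : ∀ i ∈ (univ : Finset N), d i (J l₀) = 0 :=
        (Finset.sum_eq_zero_iff_of_nonneg (fun i _ => hno i (J l₀))).mp (hd_col (J l₀))
      have := hall (I l₀) (mem_univ _)
      rw [hd_l₀] at this
      exact hgt.ne' this
  set F : Finset (N × M) := univ.filter (fun p => d p.1 p.2 < 0) with hF
  have hFne : F.Nonempty := ⟨(i₁, j₁), by simp [hF, hneg]⟩
  set ε : ℝ := F.inf' hFne (fun p => x p.1 p.2 / (-(d p.1 p.2))) with hε
  have hεpos : 0 < ε := by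
    rw [hε, Finset.lt_inf'_iff]
    intro p hp
    rw [hF, mem_filter] at hp
    exact div_pos (hd_supp _ _ hp.2.ne) (by linarith [hp.2])
  have hεle : ∀ i j, d i j < 0 → ε ≤ x i j / (-(d i j)) := by
    intro i j h
    exact Finset.inf'_le _ (by simp [hF, h] : ((i, j) : N × M) ∈ F)
  set x' : N → M → ℝ := fun i j => x i j + ε * d i j with hx'
  have hnn : ∀ i j, 0 ≤ x' i j := by
    intro i j
    rcases le_or_gt 0 (d i j) with h | h
    · have := (hx.1 i j).1
      have := mul_nonneg hεpos.le h
      simp only [hx']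
      linarith
    · have h1 : ε ≤ x i j / (-(d i j)) := hεle i j h
      have h2 : ε * (-(d i j)) ≤ x i j := by
        rw [← le_div_iff₀ (by linarith : (0:ℝ) < -(d i j))]
        exact h1
      simp only [hx']
      nlinarith
  have hcols : ∀ j, ∑ i, x' i j = 1 := by
    intro j
    simp only [hx']
    rw [Finset.sum_add_distrib, ← Finset.mul_sum, hd_col, mul_zero, add_zero, hx.2 j]
  have hx'alloc : IsFracAlloc x' := by
    refine ⟨fun i j => ⟨hnn i j, ?_⟩, hcols⟩
    calc x' i j ≤ ∑ i', x' i' j :=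
          Finset.single_le_sum (fun i' _ => hnn i' j) (mem_univ i)
      _ = 1 := hcols j
  refine ⟨x', hx'alloc, ?_, ?_, ?_⟩
  · intro i j h
    by_cases hd0 : d i j = 0
    · simp only [hx', hd0, mul_zero, add_zero] at h
      exact h
    · exact hd_supp i j hd0
  · obtain ⟨p, hpmem, hpeq⟩ := Finset.exists_mem_eq_inf' hFne (fun p => x p.1 p.2 / (-(d p.1 p.2)))
    rw [hF, mem_filter] at hpmem
    have hdp : d p.1 p.2 < 0 := hpmem.2
    refine ⟨p.1, p.2, hd_supp _ _ hdp.ne, ?_⟩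
    have hεeq : ε = x p.1 p.2 / -d p.1 p.2 := hε.trans hpeq
    have hdne : d p.1 p.2 ≠ 0 := hdp.ne
    simp only [hx']
    rw [hεeq]
    rw [div_mul_eq_mul_div, div_neg, mul_div_assoc, div_self hdne, mul_one]
    ring
  · intro i
    have : ∑ j, (v i {j} : ℝ) * x' i j
        = ∑ j, (v i {j} : ℝ) * x i j + ε * ∑ j, (v i {j} : ℝ) * d i j := by
      simp only [hx', mul_add, Finset.mul_sum]
      rw [Finset.sum_add_distrib]
      congr 1
      apply Finset.sum_congr rfl
      intro j _
      ring
    rw [this]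
    nlinarith [mul_nonneg hεpos.le (hd_val i)]

open Fin.CommRing in
lemma reduce {N M : Type*} [Fintype N] [Fintype M] (v : N → Finset M → NNReal)
    (x : N → M → ℝ) (hx : IsFracAlloc x) {k : ℕ} [NeZero k]
    (I : Fin k → N) (J : Fin k → M)
    (pos1 : ∀ l, 0 < x (I l) (J l)) (pos2 : ∀ l, 0 < x (I (l+1)) (J l))
    (Jinj : Function.Injective J) (Istep : ∀ l, I l ≠ I (l+1)) :
    ∃ x' : N → M → ℝ, IsFracAlloc x' ∧ (∀ i j, 0 < x' i j → 0 < x i j) ∧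
      (∃ i j, 0 < x i j ∧ x' i j = 0) ∧
      ∀ i, ∑ j, (v i {j} : ℝ) * x i j ≤ ∑ j, (v i {j} : ℝ) * x' i j := by
  rcases le_or_gt (∏ m, (v (I (m+1)) {J m} : ℝ)) (∏ l, (v (I l) {J l} : ℝ)) with h | h
  · exact reduce_core v x hx I J pos1 pos2 Jinj Istep h
  · -- reverse the cycle orientation
    set I' : Fin k → N := fun l => I (-l) with hI'
    set J' : Fin k → M := fun l => J (-l - 1) with hJ'
    have pos1' : ∀ l, 0 < x (I' l) (J' l) := by
      intro l
      have hcalc : (-l - 1) + 1 = -l := by ring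
      have h2 := pos2 (-l - 1)
      rw [hcalc] at h2
      exact h2
    have pos2' : ∀ l, 0 < x (I' (l+1)) (J' l) := by
      intro l
      have hcalc : -(l + 1) = -l - 1 := by ring
      simp only [hI', hJ', hcalc]
      exact pos1 (-l - 1)
    have Jinj' : Function.Injective J' := by
      intro l l' hll
      have h2 : -l - 1 = -l' - 1 := Jinj hll
      have : l = l' := by linear_combination -h2
      exact this
    have Istep' : ∀ l, I' l ≠ I' (l+1) := by
      intro l hne
      have hcalc : -(l + 1) = -l - 1 := by ring
      rw [hI'] at hne
      simp only [hcalc] at hne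
      have hcalc2 : (-l - 1) + 1 = -l := by ring
      apply Istep (-l - 1)
      rw [hcalc2]
      exact hne.symm
    have e : Equiv.Perm (Fin k) := Equiv.neg (Fin k)
    have hprod1 : ∏ l, (v (I' l) {J' l} : ℝ) = ∏ m, (v (I (m+1)) {J m} : ℝ) := by
      have inv : Function.Involutive (fun m : Fin k => -m - 1) := by
        intro m; ring
      calc ∏ l, (v (I' l) {J' l} : ℝ)
          = ∏ l, (v (I ((-l-1)+1)) {J (-l-1)} : ℝ) := by
            apply Finset.prod_congr rfl
            intro l _
            have hcalc : (-l - 1) + 1 = -l := by ring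
            rw [hcalc]
        _ = ∏ m, (v (I (m+1)) {J m} : ℝ) :=
            Equiv.prod_comp inv.toPerm (fun m => (v (I (m+1)) {J m} : ℝ))
    have hprod2 : ∏ m, (v (I' (m+1)) {J' m} : ℝ) = ∏ l, (v (I l) {J l} : ℝ) := by
      have inv : Function.Involutive (fun m : Fin k => -m - 1) := by
        intro m; ring
      calc ∏ m, (v (I' (m+1)) {J' m} : ℝ)
          = ∏ m, (v (I (-m-1)) {J (-m-1)} : ℝ) := by
            apply Finset.prod_congr rfl
            intro m _
            have hcalc : -(m + 1) = -m - 1 := by ring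
            simp only [hI', hJ', hcalc]
        _ = ∏ l, (v (I l) {J l} : ℝ) :=
            Equiv.prod_comp inv.toPerm (fun l => (v (I l) {J l} : ℝ))
    have hAB' : ∏ m, (v (I' (m+1)) {J' m} : ℝ) ≤ ∏ l, (v (I' l) {J' l} : ℝ) := by
      rw [hprod1, hprod2]
      exact h.le
    exact reduce_core v x hx I' J' pos1' pos2' Jinj' Istep' hAB'

lemma main_aux {N M : Type*} [Fintype N] [Fintype M] (v : N → Finset M → NNReal) :
    ∀ n (x : N → M → ℝ),
      (Finset.univ.filter fun p : N × M => 0 < x p.1 p.2).card = n → IsFracAlloc x →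
      ∃ y : N → M → ℝ, IsFracAlloc y ∧ (∀ i j, 0 < y i j → 0 < x i j) ∧
        (allocGraph y).IsAcyclic ∧
        ∀ i, ∑ j, (v i {j} : ℝ) * x i j ≤ ∑ j, (v i {j} : ℝ) * y i j := by
  intro n
  induction n using Nat.strong_induction_on with
  | _ n ih =>
    intro x hcard hx
    by_cases hac : (allocGraph x).IsAcyclic
    · exact ⟨x, hx, fun i j hij => hij, hac, fun i => le_refl _⟩
    · obtain ⟨n', I, J, pos1, pos2, Jinj, Istep⟩ := extract hac
      obtain ⟨x', hx', hsupp', ⟨is, js, hposs, hzeros⟩, hval'⟩ :=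
        reduce v x hx I J pos1 pos2 Jinj Istep
      have hsub : (Finset.univ.filter fun p : N × M => 0 < x' p.1 p.2) ⊆
          (Finset.univ.filter fun p : N × M => 0 < x p.1 p.2) := by
        intro p hp
        rw [Finset.mem_filter] at hp ⊢
        exact ⟨hp.1, hsupp' _ _ hp.2⟩
      have hssub : (Finset.univ.filter fun p : N × M => 0 < x' p.1 p.2) ⊂
          (Finset.univ.filter fun p : N × M => 0 < x p.1 p.2) := by
        rw [Finset.ssubset_iff_of_subset hsub]
        refine ⟨(is, js), ?_, ?_⟩
        · rw [Finset.mem_filter]; exact ⟨Finset.mem_univ _, hposs⟩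
        · rw [Finset.mem_filter]
          rintro ⟨-, hlt⟩
          rw [hzeros] at hlt
          exact lt_irrefl 0 hlt
      have hlt : (Finset.univ.filter fun p : N × M => 0 < x' p.1 p.2).card < n := by
        rw [← hcard]
        exact Finset.card_lt_card hssub
      obtain ⟨y, hy, hysupp, hyac, hyval⟩ := ih _ hlt x' rfl hx'
      exact ⟨y, hy, fun i j hij => hsupp' i j (hysupp i j hij), hyac,
        fun i => le_trans (hval' i) (hyval i)⟩

/-- cycle canceling for additive valuations. -/
theorem stmt0 {N M : Type*} [Fintype N] [Fintype M] [DecidableEq M]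
    (v : N → Finset M → NNReal) (hv : ∀ i, IsAdditive (v i))
    (x : N → M → ℝ) (hx : IsFracAlloc x) :
    ∃ y : N → M → ℝ, IsFracAlloc y ∧
      (∀ i j, 0 < y i j → 0 < x i j) ∧
      (allocGraph y).IsAcyclic ∧
      ∀ i, ∑ j, (v i {j} : ℝ) * x i j ≤ ∑ j, (v i {j} : ℝ) * y i j :=
  main_aux v _ x rfl hx
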